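/- Let α₁, …, α_n ∈ ℂ be such that (1, α₁, …, α_n) is linearly independent over ℚ. Then the ring homomorphism φ : ℤ[q^{±1}, q₁^{±1}, …, q_n^{±1}] → ℂ[[h]] determined by φ(q) = exp(h/2) and φ(q_i) = exp(α_i·h/2) is injective. -/

import Mathlib

/-- The formal exponential power series `exp(c·h) = ∑ cⁿ hⁿ / n!`. -/
noncomputable def expSeries' (c : ℂ) : PowerSeries ℂ :=
  PowerSeries.mk fun n => c ^ n / (n.factorial : ℂ)

/-- Exponential power series with distinct exponents are linearly independent over `ℂ`. -/
lemma linearIndependent_expSeries' : LinearIndependent ℂ expSeries' := by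
  rw [linearIndependent_iff']
  intro s g hg c hc
  have hcoef : ∀ m : ℕ, ∑ i ∈ s, g i * i ^ m = 0 := by
    intro m
    have h := congrArg (PowerSeries.coeff m) hg
    simp only [map_sum, map_smul, PowerSeries.coeff_mk, expSeries', smul_eq_mul,
      map_zero] at h
    have hfac : (m.factorial : ℂ) ≠ 0 := by
      exact_mod_cast Nat.factorial_ne_zero m
    calc ∑ i ∈ s, g i * i ^ m
        = (∑ i ∈ s, g i * (i ^ m / (m.factorial : ℂ))) * m.factorial := by
          rw [Finset.sum_mul]
          refine Finset.sum_congr rfl fun i _ => ?_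
          field_simp
      _ = 0 := by rw [h, zero_mul]
  classical
  set N := s.card with hN
  let e := s.equivFin.symm
  let w : Fin N → ℂ := fun j => (e j : ℂ)
  have hw : Function.Injective w := fun a b hab => by
    apply e.injective
    exact Subtype.ext hab
  have key : (fun j => g (w j)) = 0 := by
    apply Matrix.eq_zero_of_forall_pow_sum_mul_pow_eq_zero hw
    intro i
    have : ∑ j : Fin N, g (w j) * w j ^ (i : ℕ) = ∑ x ∈ s, g x * x ^ (i : ℕ) := by
      rw [← Finset.sum_coe_sort s (fun x => g x * (x : ℂ) ^ (i : ℕ))]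
      exact Equiv.sum_comp e (fun x => g (x : ℂ) * (x : ℂ) ^ (i : ℕ))
    rw [this, hcoef]
  have : g (w (s.equivFin ⟨c, hc⟩)) = 0 := congrFun key _
  simpa [w, e] using this

theorem stmt_5 (n : ℕ) (α : Fin n → ℂ)
    (hα : LinearIndependent ℚ (Fin.cons 1 α : Fin (n + 1) → ℂ))
    (φ : AddMonoidAlgebra ℤ (Fin (n + 1) →₀ ℤ) →+* PowerSeries ℂ)
    (hφ : ∀ k : Fin (n + 1) →₀ ℤ,
      φ (AddMonoidAlgebra.single k 1) =
        expSeries' ((k 0 + ∑ i : Fin n, (k i.succ : ℂ) * α i) / 2)) :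
    Function.Injective φ := by
  classical
  set c : (Fin (n + 1) →₀ ℤ) → ℂ :=
    fun k => ((k 0 : ℂ) + ∑ i : Fin n, (k i.succ : ℂ) * α i) / 2 with hc
  have hc_inj : Function.Injective c := by
    intro k k' hkk'
    have h2 : (k 0 : ℂ) + ∑ i : Fin n, (k i.succ : ℂ) * α i
        = (k' 0 : ℂ) + ∑ i : Fin n, (k' i.succ : ℂ) * α i := by
      have := hkk'
      simp only [hc, div_left_inj' (two_ne_zero' ℂ)] at this
      exact this
    have hrel : ∑ j : Fin (n + 1), (((k j - k' j : ℤ) : ℚ)) • (Fin.cons 1 α : Fin (n + 1) → ℂ) j = 0 := by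
      rw [Fin.sum_univ_succ]
      simp only [Fin.cons_zero, Fin.cons_succ, Rat.smul_def]
      push_cast
      have : ∑ i : Fin n, ((k i.succ : ℂ) - (k' i.succ : ℂ)) * α i
          = (∑ i : Fin n, (k i.succ : ℂ) * α i) - ∑ i : Fin n, (k' i.succ : ℂ) * α i := by
        rw [← Finset.sum_sub_distrib]
        exact Finset.sum_congr rfl fun i _ => by ring
      rw [this]
      have := h2
      ring_nf
      ring_nf at this
      linear_combination this
    have hz := Fintype.linearIndependent_iff.mp hα
      (fun j => ((k j - k' j : ℤ) : ℚ)) hrel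
    ext j
    have := hz j
    have : ((k j - k' j : ℤ) : ℚ) = 0 := this
    have : (k j - k' j : ℤ) = 0 := by exact_mod_cast this
    omega
  rw [injective_iff_map_eq_zero]
  intro x hx
  have hxsum : φ x = ∑ k ∈ x.coeff.support, ((x.coeff k : ℂ)) • expSeries' (c k) := by
    conv_lhs => rw [← AddMonoidAlgebra.sum_coeff_single x]
    rw [Finsupp.sum, map_sum]
    refine Finset.sum_congr rfl fun k _ => ?_
    have h1 : (AddMonoidAlgebra.single k (x.coeff k) : AddMonoidAlgebra ℤ (Fin (n + 1) →₀ ℤ))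
        = (x.coeff k) • AddMonoidAlgebra.single k 1 := by
      rw [AddMonoidAlgebra.smul_single', mul_one]
    rw [h1, map_zsmul, hφ k, ← Int.cast_smul_eq_zsmul ℂ]
  rw [hx] at hxsum
  have hli : LinearIndependent ℂ (expSeries' ∘ c) :=
    linearIndependent_expSeries'.comp c hc_inj
  have hzero : ∀ k ∈ x.coeff.support, (x.coeff k : ℂ) = 0 := by
    intro k hk
    exact linearIndependent_iff'.mp hli x.coeff.support (fun k => (x.coeff k : ℂ)) hxsum.symm k hk
  ext k
  by_cases hk : k ∈ x.coeff.support
  · have := hzero k hk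
    exact_mod_cast this
  · simpa using Finsupp.notMem_support_iff.mp hk
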